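/- Pre-image of the centering operator: for every (X,p) ∈ L^m, the set of (Y,q) ∈ L⁰ × ℤ with J(Y,q) = (X,p) is exactly Λ(X,p); moreover Λ(X,p) ⊆ L⁰ × ℤ, and for every (Y,p') ∈ Λ(X,p) one has b(Y) = sup supp(σ_{[p,p']}(X)⁺) and a(Y) = inf supp(σ_{[p,p']}(X)⁻). -/

import Mathlib

open scoped BigOperators

namespace COB

/-- Vectors of queue sizes indexed by prices in `I = {−d',…,d'}` (functions `ℤ → ℕ`
vanishing outside `I`; the support condition is part of membership in `Em`). -/
abbrev VecC := ℤ → ℕ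

/-- Pairs (buy side, sell side). -/
abbrev EC := VecC × VecC

/-- A vector is supported in `{−d',…,d'}`. -/
def suppIn (d' : ℕ) (Z : VecC) : Prop :=
  ∀ j : ℤ, Z j ≠ 0 → -(d' : ℤ) ≤ j ∧ j ≤ (d' : ℤ)

/-- Price support of a vector, inside `I = {−d',…,d'}`. -/
noncomputable def suppC (d' : ℕ) (Z : VecC) : Finset ℤ :=
  (Finset.Icc (-(d' : ℤ)) (d' : ℤ)).filter fun j => 0 < Z j

/-- `sup` of a finite set of prices, with the convention `sup ∅ = −d'`. -/
def supD (d' : ℕ) (S : Finset ℤ) : ℤ := if h : S.Nonempty then S.max' h else -(d' : ℤ)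

/-- `inf` of a finite set of prices, with the convention `inf ∅ = d'`. -/
def infD (d' : ℕ) (S : Finset ℤ) : ℤ := if h : S.Nonempty then S.min' h else (d' : ℤ)

/-- bid price `b(X) = sup supp(X⁺)` (convention `sup supp(0) = −d'`). -/
noncomputable def bC (d' : ℕ) (X : EC) : ℤ := supD d' (suppC d' X.1)

/-- ask price `a(X) = inf supp(X⁻)` (convention `inf supp(0) = d'`). -/
noncomputable def aC (d' : ℕ) (X : EC) : ℤ := infD d' (suppC d' X.2)

/-- `E^m`: configurations supported in `I` with nonempty buy and sell sides. -/
def Em (d' : ℕ) : Set EC :=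
  {X | suppIn d' X.1 ∧ suppIn d' X.2 ∧ X.1 ≠ 0 ∧ X.2 ≠ 0}

/-- `L⁰`: elements of `E^m` with `a(X) > b(X)`. -/
def L0 (d' : ℕ) : Set EC := {X | X ∈ Em d' ∧ bC d' X < aC d' X}

/-- `p̂`: the parity of `p` (`0` if `p` is even, `1` if `p` is odd). -/
def hatp (p : ℤ) : ℤ := p % 2

/-- `⌈p/2⌉` for an integer `p`. -/
def ceilHalf (p : ℤ) : ℤ := Int.fdiv (p + 1) 2

/-- `[p,p'] = ⌈p'/2⌉ − ⌈p/2⌉`. -/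
def shift (p p' : ℤ) : ℤ := ceilHalf p' - ceilHalf p

/-- The centred state space `L^m`. -/
def Lm (d' : ℕ) : Set (EC × ℤ) :=
  {Xp | Xp.1 ∈ Em d' ∧ bC d' Xp.1 < aC d' Xp.1 ∧
    aC d' Xp.1 + bC d' Xp.1 + hatp Xp.2 = 0}

/-- The truncating shift `σ_i` on a single vector. -/
def sigmaV (d' : ℕ) (i : ℤ) (Y : VecC) : VecC := fun j =>
  if min (d' : ℤ) ((d' : ℤ) - i) < j ∨ j < max (-(d' : ℤ)) (-(d' : ℤ) - i) then 0
  else Y (j + i)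

/-- The truncating shift `σ_i` acting componentwise on pairs. -/
def sigmaP (d' : ℕ) (i : ℤ) (Y : EC) : EC := (sigmaV d' i Y.1, sigmaV d' i Y.2)

/-- The centering operator `J(Y,p) = (σ_{[p,p']}(Y), p')`, `p' = p + a(Y) + b(Y) + p̂`. -/
noncomputable def J (d' : ℕ) (Y : EC) (p : ℤ) : EC × ℤ :=
  (sigmaP d' (shift p (p + aC d' Y + bC d' Y + hatp p)) Y,
    p + aC d' Y + bC d' Y + hatp p)


/-- `B_X(k) = Σ_{i ≥ k} X⁺_i` (sum over `I`). -/
noncomputable def BXC (d' : ℕ) (X : EC) (k : ℤ) : ℕ :=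
  ∑ j ∈ Finset.Icc (-(d' : ℤ)) (d' : ℤ), if k ≤ j then X.1 j else 0

/-- `S_X(k) = Σ_{i ≤ k} X⁻_i` (sum over `I`). -/
noncomputable def SXC (d' : ℕ) (X : EC) (k : ℤ) : ℕ :=
  ∑ j ∈ Finset.Icc (-(d' : ℤ)) (d' : ℤ), if j ≤ k then X.2 j else 0

/-- `g_X(k) = S_X(k) − B_X(k)`. -/
noncomputable def gXC (d' : ℕ) (X : EC) (k : ℤ) : ℤ := (SXC d' X k : ℤ) - (BXC d' X k : ℤ)

/-- `p_A(X) = inf{k ∈ I : g_X(k) > 0}`, convention `inf ∅ = d'+1`. -/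
noncomputable def pAC (d' : ℕ) (X : EC) : ℤ :=
  if h : ((Finset.Icc (-(d' : ℤ)) (d' : ℤ)).filter fun k => 0 < gXC d' X k).Nonempty
  then ((Finset.Icc (-(d' : ℤ)) (d' : ℤ)).filter fun k => 0 < gXC d' X k).min' h
  else (d' : ℤ) + 1

/-- `p_B(X) = sup{k ∈ I : g_X(k) < 0}`, convention `sup ∅ = −d'−1`. -/
noncomputable def pBC (d' : ℕ) (X : EC) : ℤ :=
  if h : ((Finset.Icc (-(d' : ℤ)) (d' : ℤ)).filter fun k => gXC d' X k < 0).Nonempty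
  then ((Finset.Icc (-(d' : ℤ)) (d' : ℤ)).filter fun k => gXC d' X k < 0).max' h
  else -(d' : ℤ) - 1

/-- `τ_i`: zero out entries at prices `> i`. -/
def tauLowC (d' : ℕ) (i : ℤ) (z : VecC) : VecC := fun j =>
  if j ≤ i ∧ -(d' : ℤ) ≤ j ∧ j ≤ (d' : ℤ) then z j else 0

/-- `τ^i`: zero out entries at prices `< i`. -/
def tauHighC (d' : ℕ) (i : ℤ) (z : VecC) : VecC := fun j =>
  if i ≤ j ∧ -(d' : ℤ) ≤ j ∧ j ≤ (d' : ℤ) then z j else 0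

/-- Standard basis vector at price `i ∈ I`. -/
def eC (d' : ℕ) (i : ℤ) : VecC := fun j =>
  if j = i ∧ -(d' : ℤ) ≤ i ∧ i ≤ (d' : ℤ) then 1 else 0

/-- Buy side after order-matching clearing (same formulas as in the fixed-price
framework). -/
noncomputable def clearPlusC (d' : ℕ) (X : EC) : VecC :=
  if gXC d' X (pBC d' X) ≤ -(X.1 (pBC d' X) : ℤ) then tauLowC d' (pBC d' X) X.1
  else fun j => tauLowC d' (pBC d' X - 1) X.1 j +
    (max 0 (-(gXC d' X (pBC d' X)))).toNat * eC d' (pBC d' X) j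

/-- Sell side after order-matching clearing. -/
noncomputable def clearMinusC (d' : ℕ) (X : EC) : VecC :=
  if (X.2 (pAC d' X) : ℤ) ≤ gXC d' X (pAC d' X) then tauHighC d' (pAC d' X) X.2
  else fun j => tauHighC d' (pAC d' X + 1) X.2 j +
    (max 0 (gXC d' X (pAC d' X))).toNat * eC d' (pAC d' X) j

/-- The order-matching clearing operator `C'` of the centred framework. -/
noncomputable def clearC (d' : ℕ) (X : EC) : EC := (clearPlusC d' X, clearMinusC d' X)

/-- The centred clearing operator `C^m(X,p) = J(C'(X), p)`. -/
noncomputable def Cm (d' : ℕ) (X : EC) (p : ℤ) : EC × ℤ := J d' (clearC d' X) p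

/-- The set `Γ^m(X)`: pre-image candidates of `X` under the order-matching clearing
operator `C'`. -/
def GammaM (d' : ℕ) (X : EC) : Set EC :=
  {Y | Y ∈ Em d' ∧
    (∀ j : ℤ, X.1 j ≤ Y.1 j ∧ X.2 j ≤ Y.2 j) ∧
    (∑ j ∈ Finset.Icc (-(d' : ℤ)) (d' : ℤ), ((Y.1 j : ℤ) - (X.1 j : ℤ))) =
      (∑ j ∈ Finset.Icc (-(d' : ℤ)) (d' : ℤ), ((Y.2 j : ℤ) - (X.2 j : ℤ))) ∧
    supD d' ((Finset.Icc (-(d' : ℤ)) (d' : ℤ)).filter fun j => X.2 j < Y.2 j) ≤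
      infD d' ((Finset.Icc (-(d' : ℤ)) (d' : ℤ)).filter fun j => X.1 j < Y.1 j) ∧
    supD d' ((Finset.Icc (-(d' : ℤ)) (d' : ℤ)).filter fun j => X.2 j < Y.2 j) ≤ aC d' X ∧
    bC d' X ≤ infD d' ((Finset.Icc (-(d' : ℤ)) (d' : ℤ)).filter fun j => X.1 j < Y.1 j)}

/-- The set `Λ(X,p)`: pre-image of `(X,p)` under the centering operator `J`. -/
def LambdaSet (d' : ℕ) (X : EC) (p : ℤ) : Set (EC × ℤ) :=
  {Yp | Yp.1 ∈ Em d' ∧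
    supD d' (suppC d' X.2) - (d' : ℤ) ≤ shift p Yp.2 ∧
    shift p Yp.2 ≤ (d' : ℤ) + infD d' (suppC d' X.1) ∧
    ∃ af bf : ℤ → ℕ,
      Yp.1.1 = (fun j => sigmaV d' (shift p Yp.2) X.1 j +
        if -(d' : ℤ) ≤ j ∧ j ≤ -(d' : ℤ) - shift p Yp.2 - 1 then bf j else 0) ∧
      Yp.1.2 = (fun j => sigmaV d' (shift p Yp.2) X.2 j +
        if (d' : ℤ) - shift p Yp.2 + 1 ≤ j ∧ j ≤ (d' : ℤ) then af j else 0)}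


lemma two_ceilHalf (p : ℤ) : 2 * ceilHalf p = p + hatp p := by
  simp only [ceilHalf, hatp, Int.fdiv_eq_ediv_of_nonneg _ (by norm_num : (0:ℤ) ≤ 2)]; omega

lemma supD_eq_of (d' : ℕ) (Z : VecC) (m : ℤ) (hm1 : -(d':ℤ) ≤ m) (hm2 : m ≤ (d':ℤ))
    (h0 : Z m ≠ 0) (hub : ∀ j, Z j ≠ 0 → j ≤ m) :
    supD d' (suppC d' Z) = m := by
  have hmem : m ∈ suppC d' Z := by
    simp only [suppC, Finset.mem_filter, Finset.mem_Icc]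
    exact ⟨⟨hm1, hm2⟩, Nat.pos_of_ne_zero h0⟩
  rw [supD, dif_pos ⟨m, hmem⟩]
  refine le_antisymm (Finset.max'_le _ _ _ fun y hy => ?_) (Finset.le_max' _ m hmem)
  simp only [suppC, Finset.mem_filter, Finset.mem_Icc] at hy
  exact hub y hy.2.ne'

lemma infD_eq_of (d' : ℕ) (Z : VecC) (m : ℤ) (hm1 : -(d':ℤ) ≤ m) (hm2 : m ≤ (d':ℤ))
    (h0 : Z m ≠ 0) (hlb : ∀ j, Z j ≠ 0 → m ≤ j) :
    infD d' (suppC d' Z) = m := by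
  have hmem : m ∈ suppC d' Z := by
    simp only [suppC, Finset.mem_filter, Finset.mem_Icc]
    exact ⟨⟨hm1, hm2⟩, Nat.pos_of_ne_zero h0⟩
  rw [infD, dif_pos ⟨m, hmem⟩]
  refine le_antisymm (Finset.min'_le _ m hmem) (Finset.le_min' _ _ _ fun y hy => ?_)
  simp only [suppC, Finset.mem_filter, Finset.mem_Icc] at hy
  exact hlb y hy.2.ne'

lemma supD_spec (d' : ℕ) (Z : VecC) (hs : suppIn d' Z) (hZ : Z ≠ 0) :
    Z (supD d' (suppC d' Z)) ≠ 0 ∧ -(d':ℤ) ≤ supD d' (suppC d' Z) ∧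
      supD d' (suppC d' Z) ≤ (d':ℤ) ∧ ∀ j, Z j ≠ 0 → j ≤ supD d' (suppC d' Z) := by
  obtain ⟨j0, hj0⟩ : ∃ a, Z a ≠ 0 := by
    by_contra h; push_neg at h; exact hZ (funext fun a => h a)
  have hj0' : j0 ∈ suppC d' Z := by
    simp only [suppC, Finset.mem_filter, Finset.mem_Icc]
    exact ⟨hs j0 hj0, Nat.pos_of_ne_zero hj0⟩
  have hne : (suppC d' Z).Nonempty := ⟨j0, hj0'⟩
  rw [supD, dif_pos hne]
  have hmem := (suppC d' Z).max'_mem hne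
  simp only [suppC, Finset.mem_filter, Finset.mem_Icc] at hmem
  refine ⟨hmem.2.ne', hmem.1.1, hmem.1.2, fun j hj => ?_⟩
  apply Finset.le_max'
  simp only [suppC, Finset.mem_filter, Finset.mem_Icc]
  exact ⟨hs j hj, Nat.pos_of_ne_zero hj⟩

lemma infD_spec (d' : ℕ) (Z : VecC) (hs : suppIn d' Z) (hZ : Z ≠ 0) :
    Z (infD d' (suppC d' Z)) ≠ 0 ∧ -(d':ℤ) ≤ infD d' (suppC d' Z) ∧
      infD d' (suppC d' Z) ≤ (d':ℤ) ∧ ∀ j, Z j ≠ 0 → infD d' (suppC d' Z) ≤ j := by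
  obtain ⟨j0, hj0⟩ : ∃ a, Z a ≠ 0 := by
    by_contra h; push_neg at h; exact hZ (funext fun a => h a)
  have hj0' : j0 ∈ suppC d' Z := by
    simp only [suppC, Finset.mem_filter, Finset.mem_Icc]
    exact ⟨hs j0 hj0, Nat.pos_of_ne_zero hj0⟩
  have hne : (suppC d' Z).Nonempty := ⟨j0, hj0'⟩
  rw [infD, dif_pos hne]
  have hmem := (suppC d' Z).min'_mem hne
  simp only [suppC, Finset.mem_filter, Finset.mem_Icc] at hmem
  refine ⟨hmem.2.ne', hmem.1.1, hmem.1.2, fun j hj => ?_⟩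
  apply Finset.min'_le
  simp only [suppC, Finset.mem_filter, Finset.mem_Icc]
  exact ⟨hs j hj, Nat.pos_of_ne_zero hj⟩

lemma sigmaV_pos {d' : ℕ} {i : ℤ} {Z : VecC} {j : ℤ} (h : sigmaV d' i Z j ≠ 0) :
    Z (j + i) ≠ 0 ∧ max (-(d':ℤ)) (-(d':ℤ) - i) ≤ j ∧ j ≤ min (d':ℤ) ((d':ℤ) - i) := by
  simp only [sigmaV] at h
  split_ifs at h with hc
  · exact absurd rfl h
  · push_neg at hc; exact ⟨h, hc.2, hc.1⟩

lemma sigmaV_apply_in (d' : ℕ) (i : ℤ) (Z : VecC) (j : ℤ)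
    (h1 : max (-(d':ℤ)) (-(d':ℤ) - i) ≤ j) (h2 : j ≤ min (d':ℤ) ((d':ℤ) - i)) :
    sigmaV d' i Z j = Z (j + i) := by
  simp only [sigmaV]; rw [if_neg (by omega)]

lemma sigmaV_apply_out (d' : ℕ) (i : ℤ) (Z : VecC) (j : ℤ)
    (h : min (d':ℤ) ((d':ℤ) - i) < j ∨ j < max (-(d':ℤ)) (-(d':ℤ) - i)) :
    sigmaV d' i Z j = 0 := by
  simp only [sigmaV]; rw [if_pos h]

/-- Lemmas E.2 and E.3 of Cont–Degond–Xuan: pre-image of the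
centering operator: for `(X,p) ∈ L^m`, the set of `(Y,q) ∈ L⁰ × ℤ` with
`J(Y,q) = (X,p)` is exactly `Λ(X,p)`; moreover `Λ(X,p) ⊆ L⁰ × ℤ` and, for every
`(Y,p') ∈ Λ(X,p)`, `b(Y) = sup supp(σ_{[p,p']}(X)⁺)` and
`a(Y) = inf supp(σ_{[p,p']}(X)⁻)`. -/
theorem preimage_J_eq_Lambda (d' : ℕ) (hd' : 1 ≤ d') :
    ∀ Xp ∈ Lm d',
      {Yq : EC × ℤ | Yq.1 ∈ L0 d' ∧ J d' Yq.1 Yq.2 = Xp} = LambdaSet d' Xp.1 Xp.2 ∧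
      (∀ Yq ∈ LambdaSet d' Xp.1 Xp.2, Yq.1 ∈ L0 d') ∧
      (∀ Yq ∈ LambdaSet d' Xp.1 Xp.2,
        bC d' Yq.1 = supD d' (suppC d' (sigmaV d' (shift Xp.2 Yq.2) Xp.1.1)) ∧
        aC d' Yq.1 = infD d' (suppC d' (sigmaV d' (shift Xp.2 Yq.2) Xp.1.2))) := by
  rintro ⟨X, p⟩ hXp
  simp only [Lm, Set.mem_setOf_eq] at hXp
  obtain ⟨⟨hs1, hs2, hn1, hn2⟩, hba, hcen⟩ := hXp
  simp only [bC, aC] at hba hcen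
  obtain ⟨hbpos, hblo, hbhi, hbub⟩ := supD_spec d' X.1 hs1 hn1
  obtain ⟨hapos, halo, hahi, halb⟩ := infD_spec d' X.2 hs2 hn2
  obtain ⟨ha2pos, ha2lo, ha2hi, ha2ub⟩ := supD_spec d' X.2 hs2 hn2
  obtain ⟨hb1pos, hb1lo, hb1hi, hb1lb⟩ := infD_spec d' X.1 hs1 hn1
  have haa2 : infD d' (suppC d' X.2) ≤ supD d' (suppC d' X.2) := ha2ub _ hapos
  have hb1bX : infD d' (suppC d' X.1) ≤ supD d' (suppC d' X.1) := hbub _ hb1pos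
  -- the key lemma: everything about a member of LambdaSet
  have key : ∀ Y : EC, ∀ p' : ℤ, (Y, p') ∈ LambdaSet d' X p →
      bC d' Y = supD d' (suppC d' X.1) - shift p p' ∧
      aC d' Y = infD d' (suppC d' X.2) - shift p p' ∧
      supD d' (suppC d' (sigmaV d' (shift p p') X.1)) = supD d' (suppC d' X.1) - shift p p' ∧
      infD d' (suppC d' (sigmaV d' (shift p p') X.2)) = infD d' (suppC d' X.2) - shift p p' ∧
      Y ∈ L0 d' ∧ J d' Y p' = (X, p) := by
    intro Y p' hmem
    simp only [LambdaSet, Set.mem_setOf_eq] at hmem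
    obtain ⟨hYE, hlo, hhi, af, bf, hY1, hY2⟩ := hmem
    set t := shift p p' with ht
    have hbt : -(d':ℤ) ≤ supD d' (suppC d' X.1) - t ∧ supD d' (suppC d' X.1) - t ≤ (d':ℤ) := by
      constructor <;> omega
    have hat : -(d':ℤ) ≤ infD d' (suppC d' X.2) - t ∧ infD d' (suppC d' X.2) - t ≤ (d':ℤ) := by
      constructor <;> omega
    have hσb : sigmaV d' t X.1 (supD d' (suppC d' X.1) - t) = X.1 (supD d' (suppC d' X.1)) := by
      rw [sigmaV_apply_in d' t X.1 _ (by omega) (by omega)]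
      congr 1; ring
    have hσa : sigmaV d' t X.2 (infD d' (suppC d' X.2) - t) = X.2 (infD d' (suppC d' X.2)) := by
      rw [sigmaV_apply_in d' t X.2 _ (by omega) (by omega)]
      congr 1; ring
    have hbY : bC d' Y = supD d' (suppC d' X.1) - t := by
      rw [bC]
      apply supD_eq_of d' Y.1 _ hbt.1 hbt.2
      · rw [hY1]; dsimp only
        rw [hσb, if_neg (by omega), Nat.add_zero]
        exact hbpos
      · intro j hj
        rw [hY1] at hj; dsimp only at hj
        by_cases hc : -(d':ℤ) ≤ j ∧ j ≤ -(d':ℤ) - t - 1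
        · omega
        · rw [if_neg hc, Nat.add_zero] at hj
          obtain ⟨hz, hw1, hw2⟩ := sigmaV_pos hj
          have := hbub _ hz
          omega
    have haY : aC d' Y = infD d' (suppC d' X.2) - t := by
      rw [aC]
      apply infD_eq_of d' Y.2 _ hat.1 hat.2
      · rw [hY2]; dsimp only
        rw [hσa, if_neg (by omega), Nat.add_zero]
        exact hapos
      · intro j hj
        rw [hY2] at hj; dsimp only at hj
        by_cases hc : (d':ℤ) - t + 1 ≤ j ∧ j ≤ (d':ℤ)
        · omega
        · rw [if_neg hc, Nat.add_zero] at hj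
          obtain ⟨hz, hw1, hw2⟩ := sigmaV_pos hj
          have := halb _ hz
          omega
    have hσbs : supD d' (suppC d' (sigmaV d' t X.1)) = supD d' (suppC d' X.1) - t := by
      apply supD_eq_of d' _ _ hbt.1 hbt.2
      · rw [hσb]; exact hbpos
      · intro j hj
        obtain ⟨hz, hw1, hw2⟩ := sigmaV_pos hj
        have := hbub _ hz; omega
    have hσas : infD d' (suppC d' (sigmaV d' t X.2)) = infD d' (suppC d' X.2) - t := by
      apply infD_eq_of d' _ _ hat.1 hat.2
      · rw [hσa]; exact hapos
      · intro j hj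
        obtain ⟨hz, hw1, hw2⟩ := sigmaV_pos hj
        have := halb _ hz; omega
    have hL0 : Y ∈ L0 d' := by
      refine ⟨hYE, ?_⟩
      simp only [bC, aC] at hbY haY ⊢
      omega
    have e1 := two_ceilHalf p
    have e2 := two_ceilHalf p'
    have ht2 : t = ceilHalf p' - ceilHalf p := ht
    have hhp : hatp p = p % 2 := rfl
    have hhp' : hatp p' = p' % 2 := rfl
    have hp'' : p' + aC d' Y + bC d' Y + hatp p' = p := by
      rw [haY, hbY]; omega
    have hJY : J d' Y p' = (X, p) := by
      rw [J, hp'']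
      have hs : shift p' p = -t := by
        rw [ht2]; simp only [shift]; ring
      rw [hs]
      refine Prod.ext (Prod.ext (funext fun j => ?_) (funext fun j => ?_)) rfl
      · show sigmaV d' (-t) Y.1 j = X.1 j
        by_cases hw : min (d':ℤ) ((d':ℤ) - -t) < j ∨ j < max (-(d':ℤ)) (-(d':ℤ) - -t)
        · rw [sigmaV_apply_out d' (-t) Y.1 j hw]
          by_contra h0
          have h0' : X.1 j ≠ 0 := fun h => h0 h.symm
          have := hs1 j h0'
          have := hbub j h0'
          have := hb1lb j h0'
          omega
        · rw [sigmaV_apply_in d' (-t) Y.1 j (by omega) (by omega), hY1]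
          dsimp only
          rw [if_neg (by omega), Nat.add_zero,
            sigmaV_apply_in d' t X.1 _ (by omega) (by omega)]
          congr 1; ring
      · show sigmaV d' (-t) Y.2 j = X.2 j
        by_cases hw : min (d':ℤ) ((d':ℤ) - -t) < j ∨ j < max (-(d':ℤ)) (-(d':ℤ) - -t)
        · rw [sigmaV_apply_out d' (-t) Y.2 j hw]
          by_contra h0
          have h0' : X.2 j ≠ 0 := fun h => h0 h.symm
          have := hs2 j h0'
          have := ha2ub j h0'
          have := halb j h0'
          omega
        · rw [sigmaV_apply_in d' (-t) Y.2 j (by omega) (by omega), hY2]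
          dsimp only
          rw [if_neg (by omega), Nat.add_zero,
            sigmaV_apply_in d' t X.2 _ (by omega) (by omega)]
          congr 1; ring
    exact ⟨hbY, haY, hσbs, hσas, hL0, hJY⟩
  refine ⟨?_, ?_, ?_⟩
  · ext ⟨Y, q⟩
    simp only [Set.mem_setOf_eq]
    constructor
    · rintro ⟨⟨hYEm, hYba⟩, hJeq⟩
      simp only [bC, aC] at hYba
      obtain ⟨hys1, hys2, hyn1, hyn2⟩ := hYEm
      obtain ⟨hbYpos, hbYlo, hbYhi, hbYub⟩ := supD_spec d' Y.1 hys1 hyn1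
      obtain ⟨haYpos, haYlo, haYhi, haYlb⟩ := infD_spec d' Y.2 hys2 hyn2
      have hp2 : q + aC d' Y + bC d' Y + hatp q = p := congrArg Prod.snd hJeq
      have hJ1 : sigmaP d' (shift q (q + aC d' Y + bC d' Y + hatp q)) Y = X :=
        congrArg Prod.fst hJeq
      rw [hp2] at hJ1
      have hX1 : sigmaV d' (shift q p) Y.1 = X.1 := congrArg Prod.fst hJ1
      have hX2 : sigmaV d' (shift q p) Y.2 = X.2 := congrArg Prod.snd hJ1
      simp only [bC, aC] at hp2
      set s := shift q p with hsdef
      have e1 := two_ceilHalf p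
      have e2 := two_ceilHalf q
      have hs2' : s = ceilHalf p - ceilHalf q := hsdef
      have hhp : hatp p = p % 2 := rfl
      have hhq : hatp q = q % 2 := rfl
      have hts : shift p q = -s := by
        rw [hs2']; simp only [shift]; ring
      -- window facts for the supports of X
      obtain ⟨_, hw1, hw2⟩ := sigmaV_pos (i := s)
        (show sigmaV d' s Y.2 (supD d' (suppC d' X.2)) ≠ 0 by rw [hX2]; exact ha2pos)
      obtain ⟨_, hw3, hw4⟩ := sigmaV_pos (i := s)
        (show sigmaV d' s Y.1 (infD d' (suppC d' X.1)) ≠ 0 by rw [hX1]; exact hb1pos)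
      refine ⟨⟨hys1, hys2, hyn1, hyn2⟩, ?_, ?_, Y.2, Y.1, ?_, ?_⟩
      · rw [hts]; omega
      · rw [hts]; omega
      · funext j
        dsimp only
        rw [← hX1, hts]
        by_cases hc : -(d':ℤ) ≤ j ∧ j ≤ -(d':ℤ) - -s - 1
        · rw [if_pos hc, sigmaV_apply_out d' (-s) _ j (by omega)]
          omega
        · rw [if_neg hc, Nat.add_zero]
          by_cases hw : min (d':ℤ) ((d':ℤ) - -s) < j ∨ j < max (-(d':ℤ)) (-(d':ℤ) - -s)
          · rw [sigmaV_apply_out d' (-s) _ j hw]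
            by_contra h0
            have h0' : Y.1 j ≠ 0 := fun h => h0 h
            have := hys1 j h0'
            have := hbYub j h0'
            omega
          · rw [sigmaV_apply_in d' (-s) _ j (by omega) (by omega),
              sigmaV_apply_in d' s Y.1 _ (by omega) (by omega)]
            congr 1; ring
      · funext j
        dsimp only
        rw [← hX2, hts]
        by_cases hc : (d':ℤ) - -s + 1 ≤ j ∧ j ≤ (d':ℤ)
        · rw [if_pos hc, sigmaV_apply_out d' (-s) _ j (by omega)]
          omega
        · rw [if_neg hc, Nat.add_zero]
          by_cases hw : min (d':ℤ) ((d':ℤ) - -s) < j ∨ j < max (-(d':ℤ)) (-(d':ℤ) - -s)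
          · rw [sigmaV_apply_out d' (-s) _ j hw]
            by_contra h0
            have h0' : Y.2 j ≠ 0 := fun h => h0 h
            have := hys2 j h0'
            have := haYlb j h0'
            omega
          · rw [sigmaV_apply_in d' (-s) _ j (by omega) (by omega),
              sigmaV_apply_in d' s Y.2 _ (by omega) (by omega)]
            congr 1; ring
    · intro hmem
      obtain ⟨_, _, _, _, hL0, hJY⟩ := key Y q hmem
      exact ⟨hL0, hJY⟩
  · rintro ⟨Y, q⟩ hmem
    exact (key Y q hmem).2.2.2.2.1
  · rintro ⟨Y, q⟩ hmem
    obtain ⟨h1, h2, h3, h4, _, _⟩ := key Y q hmem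
    exact ⟨h1.trans h3.symm, h2.trans h4.symm⟩


end COB
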